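/- arXiv:1511.01700 — 2 statements merged into one kernel-verified Lean document; each statement's English description precedes it below -/
import Mathlib

section
/- Let n ≥ 1 and let q be a real number with q > n. Then there exists a constant C > 0 such that for every C¹ function f : ℝⁿ × ℝⁿ → ℝ whose support is contained in the closed unit ball of ℝ^{2n}, the restriction of f to the diagonal satisfies ∫_{ℝⁿ} |f(x,x)| dx ≤ C · ( (∫_{ℝ^{2n}} |f(z)|^q dz)^{1/q} + (∫_{ℝ^{2n}} ‖Df(z)‖^q dz)^{1/q} ), where Df(z) denotes the (Fréchet) derivative of f at z and ‖Df(z)‖ its operator norm. -/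
open MeasureTheory

/-- The diagonal embedding `ℝⁿ → ℝⁿ × ℝⁿ = ℝ²ⁿ`, `x ↦ (x, x)`, where `ℝ²ⁿ` is
modelled as `EuclideanSpace ℝ (Fin n ⊕ Fin n)` (so it carries the Euclidean norm). -/
noncomputable def diagE (n : ℕ) (x : EuclideanSpace ℝ (Fin n)) :
    EuclideanSpace ℝ (Fin n ⊕ Fin n) :=
  WithLp.toLp 2 (Sum.elim (x : Fin n → ℝ) (x : Fin n → ℝ) : Fin n ⊕ Fin n → ℝ)

section TraceAux
open MeasureTheory Metric Set

noncomputable section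
variable (n : ℕ)

abbrev E (n : ℕ) := EuclideanSpace ℝ (Fin n)
abbrev F (n : ℕ) := EuclideanSpace ℝ (Fin n ⊕ Fin n)

/-- left inclusion as linear isometry -/
def Jl : E n →ₗᵢ[ℝ] F n where
  toFun x := WithLp.toLp 2 (Sum.elim (x : Fin n → ℝ) 0 : Fin n ⊕ Fin n → ℝ)
  map_add' x y := by ext (i|i) <;> simp [EuclideanSpace]
  map_smul' c x := by ext (i|i) <;> simp [EuclideanSpace]
  norm_map' x := by
    simp only [EuclideanSpace.norm_eq]
    congr 1
    rw [Fintype.sum_sum_type]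
    simp

def Jr : E n →ₗᵢ[ℝ] F n where
  toFun x := WithLp.toLp 2 (Sum.elim 0 (x : Fin n → ℝ) : Fin n ⊕ Fin n → ℝ)
  map_add' x y := by ext (i|i) <;> simp [EuclideanSpace]
  map_smul' c x := by ext (i|i) <;> simp [EuclideanSpace]
  norm_map' x := by
    simp only [EuclideanSpace.norm_eq]
    congr 1
    rw [Fintype.sum_sum_type]
    simp

def toF (x y : E n) : F n := Jl n x + Jr n y

lemma toF_apply (x y : E n) : toF n x y = WithLp.toLp 2 (Sum.elim (x : Fin n → ℝ) (y : Fin n → ℝ) : Fin n ⊕ Fin n → ℝ) := by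
  ext (i|i) <;> simp [toF, Jl, Jr]
  

lemma normFst_le_toF (x y : E n) : ‖x‖ ≤ ‖toF n x y‖ := by
  rw [toF_apply]
  simp only [EuclideanSpace.norm_eq]
  apply Real.sqrt_le_sqrt
  rw [Fintype.sum_sum_type]
  simp only [PiLp.toLp_apply, Sum.elim_inl, Sum.elim_inr]
  have : (0:ℝ) ≤ ∑ i : Fin n, ‖(y : Fin n → ℝ) i‖ ^ 2 :=
    Finset.sum_nonneg fun i _ => sq_nonneg _
  linarith [this]

lemma normSnd_le_toF (x y : E n) : ‖y‖ ≤ ‖toF n x y‖ := by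
  rw [toF_apply]
  simp only [EuclideanSpace.norm_eq]
  apply Real.sqrt_le_sqrt
  rw [Fintype.sum_sum_type]
  simp only [PiLp.toLp_apply, Sum.elim_inl, Sum.elim_inr]
  have : (0:ℝ) ≤ ∑ i : Fin n, ‖(x : Fin n → ℝ) i‖ ^ 2 :=
    Finset.sum_nonneg fun i _ => sq_nonneg _
  linarith [this]

lemma toF_continuous : Continuous (fun p : E n × E n => toF n p.1 p.2) := by
  exact ((Jl n).continuous.comp continuous_fst).add ((Jr n).continuous.comp continuous_snd)

lemma measurePreserving_toF :
    MeasurePreserving (fun p : E n × E n => toF n p.1 p.2) volume volume := by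
  have h1 : MeasurePreserving (MeasurableEquiv.toLp 2 (Fin n → ℝ)).symm volume volume :=
    EuclideanSpace.volume_preserving_symm_measurableEquiv_toLp (Fin n)
  have h2 : MeasurePreserving ((MeasurableEquiv.sumPiEquivProdPi (fun _ : Fin n ⊕ Fin n => ℝ)).symm)
      volume volume := volume_measurePreserving_sumPiEquivProdPi_symm _
  have h3 : MeasurePreserving ((MeasurableEquiv.toLp 2 (Fin n ⊕ Fin n → ℝ)).symm.symm)
      volume volume := (EuclideanSpace.volume_preserving_symm_measurableEquiv_toLp _).symm
  have h0 : MeasurePreserving (Prod.map (MeasurableEquiv.toLp 2 (Fin n → ℝ)).symm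
      (MeasurableEquiv.toLp 2 (Fin n → ℝ)).symm) volume volume := by
    rw [show (volume : Measure (E n × E n)) = (volume : Measure (E n)).prod volume from rfl,
      show (volume : Measure ((Fin n → ℝ) × (Fin n → ℝ))) = (volume : Measure (Fin n → ℝ)).prod volume from rfl]
    exact h1.prod h1
  have := (h3.comp h2).comp h0
  convert this using 1
  funext p
  show toF n p.1 p.2 = _
  rw [toF_apply]
  rfl

variable {n}

lemma toF_line (x h : E n) (t : ℝ) :
    toF n x (x + t • h) = toF n x x + t • (Jr n h) := by
  simp only [toF, map_add, LinearIsometry.map_smul]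
  abel

lemma pointwise_ftc {f : F n → ℝ} (hf : ContDiff ℝ 1 f) (x h : E n) (hh : ‖h‖ ≤ 1) :
    |f (toF n x x)| ≤ |f (toF n x (x + h))|
      + ∫ t in (0:ℝ)..1, ‖fderiv ℝ f (toF n x (x + t • h))‖ := by
  set γ : ℝ → F n := fun t => toF n x x + t • (Jr n h) with hγ
  have hγc : Continuous γ := by continuity
  have hγt : ∀ t : ℝ, toF n x (x + t • h) = γ t := fun t => toF_line x h t
  have hderiv : ∀ t : ℝ, HasDerivAt (fun s => f (γ s)) ((fderiv ℝ f (γ t)) (Jr n h)) t := by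
    intro t
    have h1 : HasDerivAt γ (Jr n h) t := by
      simpa [hγ] using ((hasDerivAt_id t).smul_const (Jr n h : F n)).const_add (toF n x x)
    exact ((hf.differentiable one_ne_zero (γ t)).hasFDerivAt).comp_hasDerivAt t h1
  have hcont : Continuous fun t => (fderiv ℝ f (γ t)) (Jr n h) :=
    ((hf.continuous_fderiv one_ne_zero).comp hγc).clm_apply continuous_const
  have hftc : ∫ t in (0:ℝ)..1, (fderiv ℝ f (γ t)) (Jr n h)
      = f (γ 1) - f (γ 0) :=
    intervalIntegral.integral_eq_sub_of_hasDerivAt (fun t _ => hderiv t)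
      (hcont.intervalIntegrable 0 1)
  have hγ0 : γ 0 = toF n x x := by simp [hγ]
  have hγ1 : γ 1 = toF n x (x + h) := by rw [← hγt 1, one_smul]
  have habs : |f (γ 0)| ≤ |f (γ 1)| + |∫ t in (0:ℝ)..1, (fderiv ℝ f (γ t)) (Jr n h)| := by
    rw [hftc]
    have := abs_sub_abs_le_abs_sub (f (γ 0)) (f (γ 1))
    have h2 : |f (γ 0) - f (γ 1)| = |f (γ 1) - f (γ 0)| := abs_sub_comm _ _
    linarith [abs_sub_abs_le_abs_sub (f (γ 0)) (f (γ 1)), abs_sub_comm (f (γ 0)) (f (γ 1))]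
  have hmono : |∫ t in (0:ℝ)..1, (fderiv ℝ f (γ t)) (Jr n h)|
      ≤ ∫ t in (0:ℝ)..1, ‖fderiv ℝ f (γ t)‖ := by
    calc |∫ t in (0:ℝ)..1, (fderiv ℝ f (γ t)) (Jr n h)|
        ≤ ∫ t in (0:ℝ)..1, |(fderiv ℝ f (γ t)) (Jr n h)| :=
          intervalIntegral.abs_integral_le_integral_abs zero_le_one
      _ ≤ ∫ t in (0:ℝ)..1, ‖fderiv ℝ f (γ t)‖ := by
          apply intervalIntegral.integral_mono_on zero_le_one
            (hcont.abs.intervalIntegrable 0 1)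
            (((hf.continuous_fderiv one_ne_zero).comp hγc).norm.intervalIntegrable 0 1)
          intro t _
          calc |(fderiv ℝ f (γ t)) (Jr n h)| = ‖(fderiv ℝ f (γ t)) (Jr n h)‖ := rfl
            _ ≤ ‖fderiv ℝ f (γ t)‖ * ‖(Jr n h : F n)‖ := (fderiv ℝ f (γ t)).le_opNorm _
            _ ≤ ‖fderiv ℝ f (γ t)‖ * 1 := by
                apply mul_le_mul_of_nonneg_left _ (norm_nonneg _)
                rw [(Jr n).norm_map]; exact hh
            _ = ‖fderiv ℝ f (γ t)‖ := mul_one _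
  calc |f (toF n x x)| = |f (γ 0)| := by rw [hγ0]
    _ ≤ |f (γ 1)| + |∫ t in (0:ℝ)..1, (fderiv ℝ f (γ t)) (Jr n h)| := habs
    _ ≤ |f (toF n x (x + h))| + ∫ t in (0:ℝ)..1, ‖fderiv ℝ f (toF n x (x + t • h))‖ := by
        rw [hγ1]
        gcongr
        apply le_of_le_of_eq hmono
        apply intervalIntegral.integral_congr
        intro t _
        show ‖fderiv ℝ f (γ t)‖ = ‖fderiv ℝ f (toF n x (x + t • h))‖
        rw [hγt t]

open ENNReal

lemma pointwise_enn {f : F n → ℝ} (hf : ContDiff ℝ 1 f) (x h : E n) (hh : ‖h‖ ≤ 1) :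
    ENNReal.ofReal |f (toF n x x)| ≤ ENNReal.ofReal |f (toF n x (x + h))|
      + ∫⁻ t in Ioc (0:ℝ) 1, ENNReal.ofReal ‖fderiv ℝ f (toF n x (x + t • h))‖ := by
  have hc : Continuous fun t : ℝ => ‖fderiv ℝ f (toF n x (x + t • h))‖ := by
    apply ((hf.continuous_fderiv one_ne_zero).comp _).norm
    exact ((Jl n).continuous.comp continuous_const).add
      ((Jr n).continuous.comp (continuous_const.add (continuous_id.smul continuous_const)))
  have hInt : IntegrableOn (fun t : ℝ => ‖fderiv ℝ f (toF n x (x + t • h))‖) (Ioc 0 1) volume :=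
    (intervalIntegrable_iff_integrableOn_Ioc_of_le zero_le_one).1 (hc.intervalIntegrable 0 1)
  calc ENNReal.ofReal |f (toF n x x)|
      ≤ ENNReal.ofReal (|f (toF n x (x + h))|
          + ∫ t in (0:ℝ)..1, ‖fderiv ℝ f (toF n x (x + t • h))‖) :=
        ENNReal.ofReal_le_ofReal (pointwise_ftc hf x h hh)
    _ ≤ ENNReal.ofReal |f (toF n x (x + h))|
          + ENNReal.ofReal (∫ t in (0:ℝ)..1, ‖fderiv ℝ f (toF n x (x + t • h))‖) :=
        ENNReal.ofReal_add_le
    _ ≤ _ := by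
        gcongr
        rw [intervalIntegral.integral_of_le zero_le_one,
          ofReal_integral_eq_lintegral_ofReal hInt
            (Filter.Eventually.of_forall fun t => norm_nonneg _)]

lemma avg_enn {f : F n → ℝ} (hf : ContDiff ℝ 1 f) (x : E n) :
    volume (ball (0 : E n) 1) * ENNReal.ofReal |f (toF n x x)|
      ≤ (∫⁻ h in ball (0 : E n) 1, ENNReal.ofReal |f (toF n x (x + h))|)
        + ∫⁻ h in ball (0 : E n) 1, ∫⁻ t in Ioc (0:ℝ) 1,
            ENNReal.ofReal ‖fderiv ℝ f (toF n x (x + t • h))‖ := by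
  have h1 : volume (ball (0 : E n) 1) * ENNReal.ofReal |f (toF n x x)|
      = ∫⁻ _h in ball (0 : E n) 1, ENNReal.ofReal |f (toF n x x)| := by
    rw [setLIntegral_const, mul_comm]
  rw [h1]
  have h2 : (∫⁻ h in ball (0 : E n) 1, (ENNReal.ofReal |f (toF n x (x + h))|
        + ∫⁻ t in Ioc (0:ℝ) 1, ENNReal.ofReal ‖fderiv ℝ f (toF n x (x + t • h))‖))
      = (∫⁻ h in ball (0 : E n) 1, ENNReal.ofReal |f (toF n x (x + h))|)
        + ∫⁻ h in ball (0 : E n) 1, ∫⁻ t in Ioc (0:ℝ) 1,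
            ENNReal.ofReal ‖fderiv ℝ f (toF n x (x + t • h))‖ := by
    apply lintegral_add_left'
    apply Continuous.aemeasurable
    exact ENNReal.continuous_ofReal.comp ((hf.continuous.comp
      (((Jl n).continuous.comp continuous_const).add
        ((Jr n).continuous.comp (continuous_const.add continuous_id)))).abs)
  rw [← h2]
  apply lintegral_mono_ae
  rw [ae_restrict_iff' measurableSet_ball]
  apply Filter.Eventually.of_forall
  intro h hh
  exact pointwise_enn hf x h (le_of_lt (mem_ball_zero_iff.1 hh))

lemma D_integrable {f : F n → ℝ} (hf : ContDiff ℝ 1 f)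
    (hsupp : Function.support f ⊆ closedBall 0 1) {q : ℝ} (hq0 : 0 < q) :
    Integrable (fun z => ‖fderiv ℝ f z‖ ^ q) (volume : Measure (F n)) := by
  have hDzero : ∀ z : F n, z ∉ closedBall (0 : F n) 1 → fderiv ℝ f z = 0 := by
    intro z hz
    have hopen : IsOpen (closedBall (0 : F n) 1)ᶜ := isClosed_closedBall.isOpen_compl
    have hev : f =ᶠ[nhds z] (fun _ => (0:ℝ)) := by
      apply Filter.eventuallyEq_of_mem (hopen.mem_nhds hz)
      intro y hy
      by_contra hfy
      exact hy (hsupp hfy)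
    rw [hev.fderiv_eq]
    exact fderiv_const_apply 0
  apply Continuous.integrable_of_hasCompactSupport
  · exact ((hf.continuous_fderiv one_ne_zero).norm).rpow_const (fun z => Or.inr hq0.le)
  · apply HasCompactSupport.intro (isCompact_closedBall (0 : F n) 1)
    intro z hz
    rw [hDzero z hz]
    simp [Real.zero_rpow hq0.ne']

lemma f_rpow_integrable {f : F n → ℝ} (hf : ContDiff ℝ 1 f)
    (hsupp : Function.support f ⊆ closedBall 0 1) {q : ℝ} (hq0 : 0 < q) :
    Integrable (fun z => |f z| ^ q) (volume : Measure (F n)) := by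
  apply Continuous.integrable_of_hasCompactSupport
  · exact (hf.continuous.abs).rpow_const (fun z => Or.inr hq0.le)
  · apply HasCompactSupport.intro (isCompact_closedBall (0 : F n) 1)
    intro z hz
    have : f z = 0 := by
      by_contra hfz
      exact hz (hsupp hfz)
    simp [this, Real.zero_rpow hq0.ne', abs_zero]


-- Hölder helper
lemma holder_aux {α : Type*} [MeasurableSpace α] (μ : Measure α) {S : Set α}
    (hS : MeasurableSet S) {g : α → ℝ≥0∞} (hg : AEMeasurable g μ) {p q : ℝ}
    (hpq : p.HolderConjugate q) :
    ∫⁻ a in S, g a ∂μ ≤ (μ S) ^ (1/p) * (∫⁻ a, g a ^ q ∂μ) ^ (1/q) := by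
  have h1 : ∫⁻ a in S, g a ∂μ = ∫⁻ a, (S.indicator (fun _ => (1:ℝ≥0∞)) * g) a ∂μ := by
    rw [← lintegral_indicator hS]
    congr 1
    funext a
    by_cases ha : a ∈ S <;> simp [Set.indicator, ha]
  rw [h1]
  calc ∫⁻ a, (S.indicator (fun _ => (1:ℝ≥0∞)) * g) a ∂μ
      ≤ (∫⁻ a, (S.indicator (fun _ => (1:ℝ≥0∞)) a) ^ p ∂μ) ^ (1/p) * (∫⁻ a, g a ^ q ∂μ) ^ (1/q) :=
        ENNReal.lintegral_mul_le_Lp_mul_Lq μ hpq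
          ((measurable_const.indicator hS).aemeasurable) hg
    _ = (μ S) ^ (1/p) * (∫⁻ a, g a ^ q ∂μ) ^ (1/q) := by
        congr 1
        have : ∀ a, (S.indicator (fun _ => (1:ℝ≥0∞)) a) ^ p = S.indicator (fun _ => (1:ℝ≥0∞)) a := by
          intro a
          by_cases ha : a ∈ S <;> simp [Set.indicator, ha, ENNReal.zero_rpow_of_pos hpq.pos]
        simp_rw [this]
        rw [lintegral_indicator hS]
        simp

-- scaling change of variables
lemma lintegral_comp_smul' {E : Type*} [NormedAddCommGroup E] [NormedSpace ℝ E]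
    [MeasurableSpace E] [BorelSpace E] [FiniteDimensional ℝ E]
    (μ : Measure E) [μ.IsAddHaarMeasure] (g : E → ℝ≥0∞) (hg : Measurable g) {t : ℝ} (ht : t ≠ 0) :
    ∫⁻ x, g (t • x) ∂μ = ENNReal.ofReal |(t ^ Module.finrank ℝ E)⁻¹| * ∫⁻ x, g x ∂μ := by
  rw [← lintegral_map hg (measurable_const_smul t), Measure.map_addHaar_smul μ ht,
    lintegral_smul_measure, smul_eq_mul]

lemma lint_rpow {α : Type*} [MeasureSpace α] {g : α → ℝ} {q : ℝ} (hgnn : ∀ z, 0 ≤ g z)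
    (hint : Integrable (fun z => g z ^ q) (volume : Measure α)) (hq0 : 0 ≤ q) :
    ∫⁻ z, (ENNReal.ofReal (g z)) ^ q ∂(volume : Measure α)
      = ENNReal.ofReal (∫ z, g z ^ q ∂(volume : Measure α)) := by
  simp_rw [ENNReal.ofReal_rpow_of_nonneg (hgnn _) hq0]
  rw [← ofReal_integral_eq_lintegral_ofReal hint
    (Filter.Eventually.of_forall fun z => Real.rpow_nonneg (hgnn z) q)]

lemma master (n : ℕ) (hn : 1 ≤ n) (q : ℝ) (hq : (n : ℝ) < q) :
    ∃ A B : ℝ≥0∞, A ≠ ⊤ ∧ B ≠ ⊤ ∧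
      ∀ f : F n → ℝ, ContDiff ℝ 1 f → Function.support f ⊆ closedBall 0 1 →
        ∫⁻ x, ENNReal.ofReal |f (toF n x x)| ∂(volume : Measure (E n)) ≤
          A * (∫⁻ z, (ENNReal.ofReal |f z|) ^ q ∂(volume : Measure (F n))) ^ (1/q)
          + B * (∫⁻ z, (ENNReal.ofReal ‖fderiv ℝ f z‖) ^ q ∂(volume : Measure (F n))) ^ (1/q) := by
  have hn1 : (1:ℝ) ≤ n := by exact_mod_cast hn
  have hq1 : (1:ℝ) < q := lt_of_le_of_lt hn1 hq
  have hq0 : 0 < q := lt_trans one_pos hq1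
  set p := q.conjExponent with hp
  have hpq : p.HolderConjugate q := (Real.HolderConjugate.conjExponent hq1).symm
  have hp0 : 0 < 1/p := by have := hpq.lt; positivity
  set μ : Measure (E n) := volume with hμ
  set ν : Measure (F n) := volume with hν
  set B1 : Set (E n) := closedBall 0 1 with hB1
  set Bo : Set (E n) := ball 0 1 with hBo
  set SF : Set (F n) := closedBall 0 1 with hSF
  set V : ℝ≥0∞ := μ Bo with hV
  have hV0 : V ≠ 0 := (measure_ball_pos μ 0 one_pos).ne'
  have hVtop : V ≠ ⊤ := measure_ball_lt_top.ne
  set I : Set ℝ := Ioc (0:ℝ) 1 with hI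
  set c : ℝ → ℝ≥0∞ := fun t => ENNReal.ofReal |((t:ℝ)^n)⁻¹| with hc
  set Kt : ℝ≥0∞ := ∫⁻ t in I, (c t) ^ (1/q) with hKt
  set r : ℝ := -((n:ℝ)/q) with hrdef
  have hr : -1 < r := by
    have : (n:ℝ)/q < 1 := (div_lt_one hq0).2 hq
    simp only [hrdef]
    linarith
  have hrInt : IntegrableOn (fun t : ℝ => t ^ r) I volume :=
    (intervalIntegrable_iff_integrableOn_Ioc_of_le zero_le_one).1
      (intervalIntegral.intervalIntegrable_rpow' hr)
  have hKteq : Kt = ∫⁻ t in I, ENNReal.ofReal (t ^ r) := by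
    rw [hKt]
    apply setLIntegral_congr_fun measurableSet_Ioc
    intro t ht
    show (c t) ^ (1/q) = ENNReal.ofReal (t ^ r)
    have ht0 : 0 < t := ht.1
    have h1 : c t = ENNReal.ofReal ((t:ℝ)^n)⁻¹ := by
      show ENNReal.ofReal |((t:ℝ)^n)⁻¹| = _
      rw [abs_of_nonneg (inv_nonneg.2 (pow_nonneg ht0.le n))]
    rw [h1, ENNReal.ofReal_rpow_of_nonneg (by positivity) (by positivity)]
    congr 1
    rw [← Real.rpow_natCast t n, ← Real.rpow_neg ht0.le, ← Real.rpow_mul ht0.le]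
    congr 1
    rw [hrdef]
    ring
  have hKtop : Kt ≠ ⊤ := by
    rw [hKteq, ← ofReal_integral_eq_lintegral_ofReal hrInt]
    · exact ENNReal.ofReal_ne_top
    · rw [Filter.EventuallyLE, ae_restrict_iff' measurableSet_Ioc]
      apply Filter.Eventually.of_forall
      intro t ht
      exact Real.rpow_nonneg ht.1.le r
  refine ⟨V⁻¹ * (ν SF)^(1/p), V⁻¹ * (μ B1 * V)^(1/p) * Kt, ?_, ?_, ?_⟩
  · exact ENNReal.mul_ne_top (ENNReal.inv_ne_top.2 hV0)
      (ENNReal.rpow_lt_top_of_nonneg hp0.le measure_closedBall_lt_top.ne).ne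
  · exact ENNReal.mul_ne_top (ENNReal.mul_ne_top (ENNReal.inv_ne_top.2 hV0)
      (ENNReal.rpow_lt_top_of_nonneg hp0.le
        (ENNReal.mul_ne_top measure_closedBall_lt_top.ne hVtop)).ne) hKtop
  intro f hf hsupp
  set D : F n → ℝ≥0∞ := fun z => ENNReal.ofReal ‖fderiv ℝ f z‖ with hD
  set X : ℝ≥0∞ := ∫⁻ z, (ENNReal.ofReal |f z|) ^ q ∂ν with hX
  set N : ℝ≥0∞ := ∫⁻ z, (D z) ^ q ∂ν with hN
  have hcf : Continuous f := hf.continuous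
  have hcD : Continuous fun z => ‖fderiv ℝ f z‖ := (hf.continuous_fderiv one_ne_zero).norm
  have hmg : Measurable fun z : F n => ENNReal.ofReal |f z| :=
    (ENNReal.continuous_ofReal.comp hcf.abs).measurable
  have hmD : Measurable D := (ENNReal.continuous_ofReal.comp hcD).measurable
  have c1 : Continuous fun pp : E n × E n => toF n pp.1 pp.2 := toF_continuous n
  have hNtop : N ≠ ⊤ := by
    have := lint_rpow (fun z : F n => norm_nonneg (fderiv ℝ f z))
      (D_integrable hf hsupp hq0) hq0.le
    rw [hN, hν, this]
    exact ENNReal.ofReal_ne_top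
  set T1 : ℝ≥0∞ := ∫⁻ x in B1, ∫⁻ h in Bo, ENNReal.ofReal |f (toF n x (x + h))| ∂μ ∂μ with hT1
  set T2 : ℝ≥0∞ := ∫⁻ x in B1, ∫⁻ h in Bo, ∫⁻ t in I, D (toF n x (x + t • h)) ∂volume ∂μ ∂μ with hT2
  have hsupdiag : Function.support (fun x : E n => ENNReal.ofReal |f (toF n x x)|) ⊆ B1 := by
    intro x hx
    have hfx : f (toF n x x) ≠ 0 := by
      intro h0
      simp [Function.mem_support, h0] at hx
    have : toF n x x ∈ closedBall (0 : F n) 1 := hsupp hfx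
    rw [hB1, mem_closedBall_zero_iff]
    exact le_trans (normFst_le_toF n x x) (mem_closedBall_zero_iff.1 this)
  have hL0 : ∫⁻ x, ENNReal.ofReal |f (toF n x x)| ∂μ
      = ∫⁻ x in B1, ENNReal.ofReal |f (toF n x x)| ∂μ :=
    (setLIntegral_eq_of_support_subset hsupdiag).symm
  have step1 : V * ∫⁻ x in B1, ENNReal.ofReal |f (toF n x x)| ∂μ ≤ T1 + T2 := by
    have hA : Measurable fun x : E n => ∫⁻ h in Bo, ENNReal.ofReal |f (toF n x (x + h))| ∂μ := by
      apply Measurable.lintegral_prod_right'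
        (f := fun pp : E n × E n => ENNReal.ofReal |f (toF n pp.1 (pp.1 + pp.2))|)
      exact (ENNReal.continuous_ofReal.comp (hcf.abs.comp (c1.comp
        (continuous_fst.prodMk (continuous_fst.add continuous_snd))))).measurable
    calc V * ∫⁻ x in B1, ENNReal.ofReal |f (toF n x x)| ∂μ
        = ∫⁻ x in B1, V * ENNReal.ofReal |f (toF n x x)| ∂μ :=
          (lintegral_const_mul' V _ hVtop).symm
      _ ≤ ∫⁻ x in B1, ((∫⁻ h in Bo, ENNReal.ofReal |f (toF n x (x + h))| ∂μ)
            + ∫⁻ h in Bo, ∫⁻ t in I, ENNReal.ofReal ‖fderiv ℝ f (toF n x (x + t • h))‖ ∂volume ∂μ) ∂μ :=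
          lintegral_mono fun x => avg_enn hf x
      _ = T1 + T2 := lintegral_add_left' hA.aemeasurable _
  have hsupSF : Function.support (fun z : F n => ENNReal.ofReal |f z|) ⊆ SF := by
    intro z hz
    apply hsupp
    intro h0
    simp [Function.mem_support, h0] at hz
  have step2 : T1 ≤ (ν SF) ^ (1/p) * X ^ (1/q) := by
    calc T1 ≤ ∫⁻ x in B1, ∫⁻ y, ENNReal.ofReal |f (toF n x y)| ∂μ ∂μ := by
          apply lintegral_mono
          intro x
          calc ∫⁻ h in Bo, ENNReal.ofReal |f (toF n x (x + h))| ∂μ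
              ≤ ∫⁻ h, ENNReal.ofReal |f (toF n x (x + h))| ∂μ := setLIntegral_le_lintegral _ _
            _ = ∫⁻ y, ENNReal.ofReal |f (toF n x y)| ∂μ :=
                lintegral_add_left_eq_self (fun y => ENNReal.ofReal |f (toF n x y)|) x
      _ ≤ ∫⁻ x, ∫⁻ y, ENNReal.ofReal |f (toF n x y)| ∂μ ∂μ := setLIntegral_le_lintegral _ _
      _ = ∫⁻ z, ENNReal.ofReal |f z| ∂ν := by
          have h1 : ∫⁻ pp : E n × E n, ENNReal.ofReal |f (toF n pp.1 pp.2)| ∂(μ.prod μ)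
              = ∫⁻ x, ∫⁻ y, ENNReal.ofReal |f (toF n x y)| ∂μ ∂μ :=
            lintegral_prod _ ((hmg.comp c1.measurable).aemeasurable)
          rw [← h1]
          exact (measurePreserving_toF n).lintegral_comp hmg
      _ = ∫⁻ z in SF, ENNReal.ofReal |f z| ∂ν := (setLIntegral_eq_of_support_subset hsupSF).symm
      _ ≤ (ν SF) ^ (1/p) * X ^ (1/q) :=
          holder_aux ν measurableSet_closedBall hmg.aemeasurable hpq
  have step3 : T2 ≤ (μ B1 * V) ^ (1/p) * Kt * N ^ (1/q) := by
    have hNq : N ^ (1/q) ≠ ⊤ := (ENNReal.rpow_lt_top_of_nonneg (by positivity) hNtop).ne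
    have hswap1 : ∀ x : E n, ∫⁻ h in Bo, ∫⁻ t in I, D (toF n x (x + t • h)) ∂volume ∂μ
        = ∫⁻ t in I, ∫⁻ h in Bo, D (toF n x (x + t • h)) ∂μ ∂volume := by
      intro x
      apply lintegral_lintegral_swap
      apply Measurable.aemeasurable
      exact hmD.comp (c1.comp (continuous_const.prodMk
        (continuous_const.add (continuous_snd.smul continuous_fst)))).measurable
    have hswap2 : T2 = ∫⁻ t in I, ∫⁻ x in B1, ∫⁻ h in Bo, D (toF n x (x + t • h)) ∂μ ∂μ ∂volume := by
      rw [hT2]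
      simp_rw [hswap1]
      apply lintegral_lintegral_swap
      apply Measurable.aemeasurable
      apply Measurable.lintegral_prod_right'
        (f := fun w : (E n × ℝ) × E n => D (toF n w.1.1 (w.1.1 + w.1.2 • w.2)))
      exact hmD.comp (c1.comp ((continuous_fst.comp continuous_fst).prodMk
        ((continuous_fst.comp continuous_fst).add
          ((continuous_snd.comp continuous_fst).smul continuous_snd)))).measurable
    have hWt : ∀ t ∈ I, ∫⁻ x in B1, ∫⁻ h in Bo, D (toF n x (x + t • h)) ∂μ ∂μ
        ≤ (μ B1 * V) ^ (1/p) * ((c t) ^ (1/q) * N ^ (1/q)) := by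
      intro t ht
      have ht0 : (0:ℝ) < t := ht.1
      set σ : Measure (E n × E n) := (μ.restrict B1).prod (μ.restrict Bo) with hσ
      have hgm : Measurable fun w : E n × E n => D (toF n w.1 (w.1 + t • w.2)) :=
        hmD.comp (c1.comp (continuous_fst.prodMk
          (continuous_fst.add ((continuous_const (y := t)).smul continuous_snd)))).measurable
      have e1 : ∫⁻ x in B1, ∫⁻ h in Bo, D (toF n x (x + t • h)) ∂μ ∂μ
          = ∫⁻ w, D (toF n w.1 (w.1 + t • w.2)) ∂σ := (lintegral_prod _ hgm.aemeasurable).symm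
      rw [e1]
      have e2 := holder_aux σ MeasurableSet.univ hgm.aemeasurable hpq
      rw [Measure.restrict_univ] at e2
      have e3 : σ univ = μ B1 * V := by
        rw [hσ, ← univ_prod_univ, Measure.prod_prod, Measure.restrict_apply_univ,
          Measure.restrict_apply_univ]
      refine le_trans e2 ?_
      rw [e3, ← ENNReal.mul_rpow_of_nonneg _ _ (by positivity : (0:ℝ) ≤ 1/q)]
      gcongr
      calc ∫⁻ w, D (toF n w.1 (w.1 + t • w.2)) ^ q ∂σ
          ≤ ∫⁻ w, D (toF n w.1 (w.1 + t • w.2)) ^ q ∂(μ.prod μ) := by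
            rw [hσ, Measure.prod_restrict]
            exact setLIntegral_le_lintegral _ _
        _ = ∫⁻ x, ∫⁻ h, D (toF n x (x + t • h)) ^ q ∂μ ∂μ :=
            lintegral_prod _ (hgm.pow_const q).aemeasurable
        _ = ∫⁻ x, (c t) * ∫⁻ y, D (toF n x y) ^ q ∂μ ∂μ := by
            apply lintegral_congr
            intro x
            have hGm : Measurable fun w : E n => D (toF n x (x + w)) ^ q :=
              (hmD.comp (c1.comp (continuous_const.prodMk
                (continuous_const.add continuous_id))).measurable).pow_const q
            calc ∫⁻ h, D (toF n x (x + t • h)) ^ q ∂μ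
                = ∫⁻ h, (fun w => D (toF n x (x + w)) ^ q) (t • h) ∂μ := rfl
              _ = ENNReal.ofReal |(t ^ Module.finrank ℝ (E n))⁻¹|
                    * ∫⁻ w, D (toF n x (x + w)) ^ q ∂μ :=
                  lintegral_comp_smul' μ _ hGm ht0.ne'
              _ = (c t) * ∫⁻ y, D (toF n x y) ^ q ∂μ := by
                  rw [finrank_euclideanSpace_fin,
                    lintegral_add_left_eq_self (fun y => D (toF n x y) ^ q) x]
        _ = (c t) * ∫⁻ x, ∫⁻ y, D (toF n x y) ^ q ∂μ ∂μ :=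
            lintegral_const_mul' (c t) _ ENNReal.ofReal_ne_top
        _ = (c t) * N := by
            have h1 : ∫⁻ pp : E n × E n, D (toF n pp.1 pp.2) ^ q ∂(μ.prod μ)
                = ∫⁻ x, ∫⁻ y, D (toF n x y) ^ q ∂μ ∂μ :=
              lintegral_prod _ (((hmD.comp c1.measurable).pow_const q).aemeasurable)
            rw [← h1]
            congr 1
            exact (measurePreserving_toF n).lintegral_comp (hmD.pow_const q)
    have hboundm : Measurable fun t : ℝ =>
        (μ B1 * V) ^ (1/p) * ((c t) ^ (1/q) * N ^ (1/q)) := by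
      apply Measurable.const_mul
      apply Measurable.mul_const
      exact (((measurable_id.pow_const n).inv.abs).ennreal_ofReal).pow_const (1/q)
    calc T2 = ∫⁻ t in I, ∫⁻ x in B1, ∫⁻ h in Bo, D (toF n x (x + t • h)) ∂μ ∂μ ∂volume := hswap2
      _ ≤ ∫⁻ t in I, (μ B1 * V) ^ (1/p) * ((c t) ^ (1/q) * N ^ (1/q)) ∂volume :=
          setLIntegral_mono hboundm hWt
      _ = ∫⁻ t in I, ((μ B1 * V) ^ (1/p) * N ^ (1/q)) * (c t) ^ (1/q) ∂volume := by
          apply lintegral_congr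
          intro t
          ring
      _ = ((μ B1 * V) ^ (1/p) * N ^ (1/q)) * Kt := by
          rw [hKt]
          exact lintegral_const_mul' _ _ (ENNReal.mul_ne_top
            (ENNReal.rpow_lt_top_of_nonneg hp0.le
              (ENNReal.mul_ne_top measure_closedBall_lt_top.ne hVtop)).ne hNq)
      _ = (μ B1 * V) ^ (1/p) * Kt * N ^ (1/q) := by ring
  calc ∫⁻ x, ENNReal.ofReal |f (toF n x x)| ∂μ
      = V⁻¹ * (V * ∫⁻ x in B1, ENNReal.ofReal |f (toF n x x)| ∂μ) := by
        rw [← mul_assoc, ENNReal.inv_mul_cancel hV0 hVtop, one_mul, hL0]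
    _ ≤ V⁻¹ * (T1 + T2) := by gcongr
    _ ≤ V⁻¹ * ((ν SF) ^ (1/p) * X ^ (1/q) + (μ B1 * V) ^ (1/p) * Kt * N ^ (1/q)) := by
        gcongr
    _ = V⁻¹ * (ν SF) ^ (1/p) * X ^ (1/q) + V⁻¹ * (μ B1 * V) ^ (1/p) * Kt * N ^ (1/q) := by
        rw [mul_add]
        ring

theorem diagonal_trace_inequality' (n : ℕ) (hn : 1 ≤ n) (q : ℝ) (hq : (n : ℝ) < q) :
    ∃ C : ℝ, 0 < C ∧
      ∀ f : EuclideanSpace ℝ (Fin n ⊕ Fin n) → ℝ,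
        ContDiff ℝ 1 f →
        Function.support f ⊆ Metric.closedBall 0 1 →
        ∫ x : EuclideanSpace ℝ (Fin n), |f (WithLp.toLp 2 (Sum.elim (x : Fin n → ℝ) (x : Fin n → ℝ) : Fin n ⊕ Fin n → ℝ))| ≤
          C * ((∫ z : EuclideanSpace ℝ (Fin n ⊕ Fin n), |f z| ^ q) ^ (1 / q)
            + (∫ z : EuclideanSpace ℝ (Fin n ⊕ Fin n), ‖fderiv ℝ f z‖ ^ q) ^ (1 / q)) := by
  have hn1 : (1:ℝ) ≤ n := by exact_mod_cast hn
  have hq0 : 0 < q := lt_of_lt_of_le one_pos (le_of_lt (lt_of_le_of_lt hn1 hq))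
  obtain ⟨A, B, hA, hB, hmain⟩ := master n hn q hq
  set M : ℝ := max 1 (A.toReal + B.toReal) with hM
  refine ⟨M, lt_of_lt_of_le one_pos (le_max_left _ _), ?_⟩
  intro f hf hsupp
  have hdiag : ∀ x : E n, WithLp.toLp 2 (Sum.elim (x : Fin n → ℝ) (x : Fin n → ℝ) : Fin n ⊕ Fin n → ℝ)
      = toF n x x := fun x => (toF_apply n x x).symm
  set I1 : ℝ := ∫ z, |f z| ^ q ∂(volume : Measure (F n)) with hI1
  set I2 : ℝ := ∫ z, ‖fderiv ℝ f z‖ ^ q ∂(volume : Measure (F n)) with hI2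
  have hI1nn : 0 ≤ I1 := integral_nonneg fun z => Real.rpow_nonneg (abs_nonneg _) q
  have hI2nn : 0 ≤ I2 := integral_nonneg fun z => Real.rpow_nonneg (norm_nonneg _) q
  have hLint : Integrable (fun x : E n => |f (toF n x x)|) volume := by
    apply Continuous.integrable_of_hasCompactSupport
    · exact (hf.continuous.comp ((toF_continuous n).comp
        (continuous_id.prodMk continuous_id))).abs
    · apply HasCompactSupport.intro (isCompact_closedBall (0 : E n) 1)
      intro x hx
      have : f (toF n x x) = 0 := by
        by_contra h0
        apply hx
        rw [mem_closedBall_zero_iff]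
        exact le_trans (normFst_le_toF n x x)
          (mem_closedBall_zero_iff.1 (hsupp h0))
      simp [this]
  have hLnn : 0 ≤ ∫ x, |f (toF n x x)| ∂(volume : Measure (E n)) :=
    integral_nonneg fun x => abs_nonneg _
  have hLHS : ENNReal.ofReal (∫ x, |f (toF n x x)| ∂(volume : Measure (E n)))
      = ∫⁻ x, ENNReal.ofReal |f (toF n x x)| ∂(volume : Measure (E n)) :=
    ofReal_integral_eq_lintegral_ofReal hLint
      (Filter.Eventually.of_forall fun x => abs_nonneg _)
  have hXeq : ∫⁻ z, (ENNReal.ofReal |f z|) ^ q ∂(volume : Measure (F n)) = ENNReal.ofReal I1 :=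
    lint_rpow (fun z => abs_nonneg (f z)) (f_rpow_integrable hf hsupp hq0) hq0.le
  have hNeq : ∫⁻ z, (ENNReal.ofReal ‖fderiv ℝ f z‖) ^ q ∂(volume : Measure (F n))
      = ENNReal.ofReal I2 :=
    lint_rpow (fun z => norm_nonneg (fderiv ℝ f z)) (D_integrable hf hsupp hq0) hq0.le
  have key := hmain f hf hsupp
  rw [hXeq, hNeq, ← hLHS] at key
  have hRtop : A * (ENNReal.ofReal I1) ^ (1/q) + B * (ENNReal.ofReal I2) ^ (1/q) ≠ ⊤ :=
    ENNReal.add_ne_top.2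
      ⟨ENNReal.mul_ne_top hA (ENNReal.rpow_lt_top_of_nonneg (by positivity)
        ENNReal.ofReal_ne_top).ne,
       ENNReal.mul_ne_top hB (ENNReal.rpow_lt_top_of_nonneg (by positivity)
        ENNReal.ofReal_ne_top).ne⟩
  have hreal : ∫ x, |f (toF n x x)| ∂(volume : Measure (E n))
      ≤ A.toReal * I1 ^ (1/q) + B.toReal * I2 ^ (1/q) := by
    have h2 := ENNReal.toReal_mono hRtop key
    rw [ENNReal.toReal_ofReal hLnn] at h2
    refine le_trans h2 (le_of_eq ?_)
    rw [ENNReal.toReal_add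
      (ENNReal.mul_ne_top hA (ENNReal.rpow_lt_top_of_nonneg (by positivity)
        ENNReal.ofReal_ne_top).ne)
      (ENNReal.mul_ne_top hB (ENNReal.rpow_lt_top_of_nonneg (by positivity)
        ENNReal.ofReal_ne_top).ne),
      ENNReal.toReal_mul, ENNReal.toReal_mul,
      ← ENNReal.toReal_rpow, ← ENNReal.toReal_rpow,
      ENNReal.toReal_ofReal hI1nn, ENNReal.toReal_ofReal hI2nn]
  have hAM : A.toReal ≤ M := le_trans (le_add_of_nonneg_right ENNReal.toReal_nonneg)
    (le_max_right _ _)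
  have hBM : B.toReal ≤ M := le_trans (le_add_of_nonneg_left ENNReal.toReal_nonneg)
    (le_max_right _ _)
  have ha : (0:ℝ) ≤ I1 ^ (1/q) := Real.rpow_nonneg hI1nn _
  have hb : (0:ℝ) ≤ I2 ^ (1/q) := Real.rpow_nonneg hI2nn _
  calc ∫ x, |f (WithLp.toLp 2 (Sum.elim (x : Fin n → ℝ) (x : Fin n → ℝ) : Fin n ⊕ Fin n → ℝ))|
        ∂(volume : Measure (E n))
      = ∫ x, |f (toF n x x)| ∂(volume : Measure (E n)) := by
        congr 1
        funext x
        rw [hdiag x]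
    _ ≤ A.toReal * I1 ^ (1/q) + B.toReal * I2 ^ (1/q) := hreal
    _ ≤ M * I1 ^ (1/q) + M * I2 ^ (1/q) := by
        gcongr
    _ = M * (I1 ^ (1/q) + I2 ^ (1/q)) := by ring

end

end TraceAux

/-- Trace-type inequality: for `q > n` there is a constant `C > 0` such that every
`C¹` function on `ℝⁿ × ℝⁿ ≅ ℝ²ⁿ` supported in the closed unit ball satisfies
`∫ |f(x,x)| dx ≤ C (‖f‖_{L^q} + ‖Df‖_{L^q})`. -/
theorem diagonal_trace_inequality (n : ℕ) (hn : 1 ≤ n) (q : ℝ) (hq : (n : ℝ) < q) :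
    ∃ C : ℝ, 0 < C ∧
      ∀ f : EuclideanSpace ℝ (Fin n ⊕ Fin n) → ℝ,
        ContDiff ℝ 1 f →
        Function.support f ⊆ Metric.closedBall 0 1 →
        ∫ x : EuclideanSpace ℝ (Fin n), |f (diagE n x)| ≤
          C * ((∫ z : EuclideanSpace ℝ (Fin n ⊕ Fin n), |f z| ^ q) ^ (1 / q)
            + (∫ z : EuclideanSpace ℝ (Fin n ⊕ Fin n), ‖fderiv ℝ f z‖ ^ q) ^ (1 / q)) := by
  obtain ⟨C, hC, hbound⟩ := diagonal_trace_inequality' n hn q hq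
  refine ⟨C, hC, fun f hf hs => ?_⟩
  have := hbound f hf hs
  simpa [diagE] using this
end

section
/- Let n ≥ 1. Write σ_{n−1} = {x ∈ ℝⁿ : x_i ≥ 0 for all i and ∑_{i=1}^n x_i = 1} and σ_n = {y ∈ ℝ^{n+1} : y_j ≥ 0 for all j and ∑_{j=1}^{n+1} y_j = 1} for the standard simplices. Define η : ℝⁿ → ℝ by η(x) = ∏_{i=1}^n x_i and ζ : σ_{n−1} × [0,1) → ℝ^{n+1} by ζ(x,t) = ( (1 − t·η(x))·x , t·η(x) ). Then ζ(x,t) ∈ σ_n for every (x,t) ∈ σ_{n−1} × [0,1), and the restriction of ζ to {x ∈ σ_{n−1} : x_i > 0 for all i} × [0,1) is injective. -/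
open Finset

/-- The standard simplex `σ_{m-1} = {x ∈ ℝᵐ : xᵢ ≥ 0, ∑ xᵢ = 1}`. -/
def stdSimplexSet (m : ℕ) : Set (Fin m → ℝ) :=
  {x | (∀ i, 0 ≤ x i) ∧ ∑ i, x i = 1}

/-- `η(x) = ∏ᵢ xᵢ`. -/
def etaProd (n : ℕ) (x : Fin n → ℝ) : ℝ := ∏ i, x i

/-- `ζ(x,t) = ((1 - t·η(x))·x , t·η(x)) ∈ ℝ^{n+1}`: the first `n` coordinates are
`(1 - t·η(x))·xᵢ` and the last coordinate is `t·η(x)`. -/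
def zetaMap (n : ℕ) (x : Fin n → ℝ) (t : ℝ) : Fin (n + 1) → ℝ :=
  Fin.snoc (fun i => (1 - t * etaProd n x) * x i) (t * etaProd n x)

/-- `ζ` maps `σ_{n-1} × [0,1)` into `σ_n`, and is injective on
(relative interior of `σ_{n-1}`) `× [0,1)`. -/
theorem zetaMap_mem_simplex_and_injOn (n : ℕ) (hn : 1 ≤ n) :
    (∀ x ∈ stdSimplexSet n, ∀ t ∈ Set.Ico (0 : ℝ) 1,
      zetaMap n x t ∈ stdSimplexSet (n + 1)) ∧
    Set.InjOn (fun p : (Fin n → ℝ) × ℝ => zetaMap n p.1 p.2)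
      (({x | x ∈ stdSimplexSet n ∧ ∀ i, 0 < x i}) ×ˢ Set.Ico (0 : ℝ) 1) := by
  have eta_le_one : ∀ x ∈ stdSimplexSet n, etaProd n x ≤ 1 := by
    rintro x ⟨hx0, hx1⟩
    exact Finset.prod_le_one (fun i _ => hx0 i)
      (fun i _ => hx1 ▸ Finset.single_le_sum (fun j _ => hx0 j) (Finset.mem_univ i))
  constructor
  · rintro x hx t ⟨ht0, ht1⟩
    obtain ⟨hx0, hx1⟩ := hx
    have hη0 : 0 ≤ etaProd n x := Finset.prod_nonneg fun i _ => hx0 i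
    have hη1 : etaProd n x ≤ 1 := eta_le_one x ⟨hx0, hx1⟩
    have hc0 : 0 ≤ t * etaProd n x := mul_nonneg ht0 hη0
    have hc1 : t * etaProd n x ≤ 1 := by nlinarith
    constructor
    · intro j
      refine Fin.lastCases ?_ ?_ j
      · simpa [zetaMap] using hc0
      · intro i
        simp only [zetaMap, Fin.snoc_castSucc]
        exact mul_nonneg (by linarith) (hx0 i)
    · rw [Fin.sum_univ_castSucc]
      simp only [zetaMap, Fin.snoc_castSucc, Fin.snoc_last, ← Finset.mul_sum, hx1]
      ring
  · rintro ⟨x, t⟩ ⟨⟨hx, hxpos⟩, ht0, ht1⟩ ⟨y, s⟩ ⟨⟨hy, hypos⟩, hs0, hs1⟩ heq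
    simp only at heq
    have hηx : 0 < etaProd n x := Finset.prod_pos fun i _ => hxpos i
    have hηy : 0 < etaProd n y := Finset.prod_pos fun i _ => hypos i
    have hηx1 : etaProd n x ≤ 1 := eta_le_one x hx
    have hlast : t * etaProd n x = s * etaProd n y := by
      have := congrFun heq (Fin.last n)
      simpa [zetaMap] using this
    have hc1 : t * etaProd n x < 1 := by nlinarith
    have hxy : x = y := by
      funext i
      have h := congrFun heq (Fin.castSucc i)
      simp only [zetaMap, Fin.snoc_castSucc] at h
      rw [← hlast] at h
      have h1 : (1 : ℝ) - t * etaProd n x ≠ 0 := by linarith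
      exact mul_left_cancel₀ h1 h
    subst hxy
    have hts : t = s := mul_right_cancel₀ hηx.ne' hlast
    simp [hts]
end
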